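/- For every δ ∈ [0,1), every C > 0, every β > 0, and every integer k ≥ 1, there exist disjoint finite sets A, B ⊆ [0,1]² with A ∪ B nonempty and 0 < |A| − |B| < β·|A ∪ B|, such that for every partition of [0,1]² into measurable sets D₁, …, D_k, if (a) for every i, (1−δ)·⌊|A∪B|/k⌋ ≤ |(A∪B) ∩ D_i| ≤ (1+δ)·⌈|A∪B|/k⌉, and (b) for every i there exist L_i ≥ 0 and a map γ_i : ℝ → ℝ² that is 1-Lipschitz on [0, L_i] with frontier(D_i) ⊆ γ_i '' [0, L_i] and L_i² ≤ C·vol(D_i), then A strictly wins every district, i.e., |A ∩ D_i| > |B ∩ D_i| for every i ∈ {1, …, k}. -/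

import Mathlib

open MeasureTheory Metric Set ENNReal

noncomputable section

/-- The plane `ℝ²` with the Euclidean metric. -/
abbrev Plane := EuclideanSpace ℝ (Fin 2)

/-- The closed unit square `[0,1]² ⊆ ℝ²`. -/
def unitSq : Set Plane := {x | x 0 ∈ Set.Icc (0 : ℝ) 1 ∧ x 1 ∈ Set.Icc (0 : ℝ) 1}

namespace MSaux
def pt (x y : ℝ) : Plane := WithLp.toLp 2 ![x, y]
@[simp] lemma pt_apply0 (x y : ℝ) : pt x y 0 = x := rfl
@[simp] lemma pt_apply1 (x y : ℝ) : pt x y 1 = y := rfl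
lemma dist_pt (x y x' y' : ℝ) :
    dist (pt x y) (pt x' y') = Real.sqrt ((x - x')^2 + (y - y')^2) := by
  rw [EuclideanSpace.dist_eq, Fin.sum_univ_two]
  simp [Real.dist_eq, sq_abs]
lemma dist_pt_le {x y x' y' r : ℝ} (hr : 0 ≤ r)
    (h : (x - x')^2 + (y - y')^2 ≤ r^2) : dist (pt x y) (pt x' y') ≤ r := by
  rw [dist_pt]
  calc Real.sqrt ((x - x')^2 + (y - y')^2) ≤ Real.sqrt (r^2) := Real.sqrt_le_sqrt h
  _ = r := Real.sqrt_sq hr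
lemma abs_sub_x_le_dist_pt (x y x' y' : ℝ) : |x - x'| ≤ dist (pt x y) (pt x' y') := by
  rw [dist_pt]
  calc |x - x'| = Real.sqrt ((x-x')^2) := (Real.sqrt_sq_eq_abs _).symm
  _ ≤ _ := Real.sqrt_le_sqrt (by nlinarith [sq_nonneg (y - y')])
lemma abs_sub_y_le_dist_pt (x y x' y' : ℝ) : |y - y'| ≤ dist (pt x y) (pt x' y') := by
  rw [dist_pt]
  calc |y - y'| = Real.sqrt ((y-y')^2) := (Real.sqrt_sq_eq_abs _).symm
  _ ≤ _ := Real.sqrt_le_sqrt (by nlinarith [sq_nonneg (x - x')])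

/-- cluster point spacing -/
def eps (N q : ℕ) : ℝ := 1 / (8 * N * q)

/-- the `j`-th point of the cluster in cell `(a,b)` -/
def Ppt (N q : ℕ) (v : Fin N × Fin N × Fin q) : Plane :=
  pt (((v.1 : ℝ) + 2⁻¹) / N + (v.2.2 : ℝ) * eps N q) (((v.2.1 : ℝ) + 2⁻¹) / N)

/-- center of cell -/
def ctr (N : ℕ) (c : Fin N × Fin N) : Plane :=
  pt (((c.1 : ℝ) + 2⁻¹) / N) (((c.2 : ℝ) + 2⁻¹) / N)

lemma eps_pos {N q : ℕ} (hN : 0 < N) (hq : 0 < q) : 0 < eps N q := by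
  have : (0:ℝ) < N := by exact_mod_cast hN
  have : (0:ℝ) < q := by exact_mod_cast hq
  unfold eps; positivity

lemma mul_eps_le {N q : ℕ} (hN : 0 < N) (hq : 0 < q) (j : Fin q) :
    (j : ℝ) * eps N q ≤ 1 / (8 * N) := by
  have hN' : (0:ℝ) < N := by exact_mod_cast hN
  have hq' : (0:ℝ) < q := by exact_mod_cast hq
  have hj : (j : ℝ) ≤ q := by exact_mod_cast (j.isLt.le)
  have : (j:ℝ) * eps N q ≤ (q:ℝ) * eps N q :=
    mul_le_mul_of_nonneg_right hj (eps_pos hN hq).le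
  refine this.trans (le_of_eq ?_)
  unfold eps
  field_simp

lemma Ppt_mem_unitSq {N q : ℕ} (hN : 0 < N) (hq : 0 < q) (v : Fin N × Fin N × Fin q) :
    Ppt N q v ∈ unitSq := by
  have hN' : (0:ℝ) < N := by exact_mod_cast hN
  have ha : (v.1 : ℝ) + 1 ≤ N := by exact_mod_cast v.1.isLt
  have hb : (v.2.1 : ℝ) + 1 ≤ N := by exact_mod_cast v.2.1.isLt
  have ha0 : (0:ℝ) ≤ (v.1 : ℝ) := Nat.cast_nonneg _
  have hb0 : (0:ℝ) ≤ (v.2.1 : ℝ) := Nat.cast_nonneg _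
  have hje : (0:ℝ) ≤ (v.2.2 : ℝ) * eps N q :=
    mul_nonneg (Nat.cast_nonneg _) (eps_pos hN hq).le
  have hje' : (v.2.2 : ℝ) * eps N q ≤ 1 / (8 * N) := mul_eps_le hN hq _
  constructor
  · show ((v.1 : ℝ) + 2⁻¹) / N + (v.2.2 : ℝ) * eps N q ∈ Set.Icc (0:ℝ) 1
    constructor
    · have : (0:ℝ) ≤ ((v.1 : ℝ) + 2⁻¹) / N := by positivity
      linarith
    · have h1 : ((v.1 : ℝ) + 2⁻¹) / N + 2⁻¹ / N ≤ 1 := by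
        rw [← add_div, div_le_one hN']; linarith
      have h2 : (1:ℝ) / (8 * N) ≤ 2⁻¹ / N := by
        rw [div_le_div_iff₀ (by positivity) hN']; nlinarith
      linarith
  · show ((v.2.1 : ℝ) + 2⁻¹) / N ∈ Set.Icc (0:ℝ) 1
    constructor
    · positivity
    · rw [div_le_one hN']; nlinarith

lemma dist_Ppt_ctr {N q : ℕ} (hN : 0 < N) (hq : 0 < q) (v : Fin N × Fin N × Fin q) :
    dist (Ppt N q v) (ctr N (v.1, v.2.1)) ≤ 1 / (8 * N) := by
  have hN' : (0:ℝ) < N := by exact_mod_cast hN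
  have hje : (0:ℝ) ≤ (v.2.2 : ℝ) * eps N q :=
    mul_nonneg (Nat.cast_nonneg _) (eps_pos hN hq).le
  have hje' : (v.2.2 : ℝ) * eps N q ≤ 1 / (8 * N) := mul_eps_le hN hq _
  apply dist_pt_le (by positivity)
  have key := mul_self_le_mul_self hje hje'
  ring_nf
  ring_nf at key
  nlinarith [key]

lemma cast_eq_of_abs_lt_one {m n : ℕ} (h : |(m:ℝ) - (n:ℝ)| < 1) : m = n := by
  have : ((m:ℤ) : ℝ) - ((n:ℤ) : ℝ) = (((m - n : ℤ)) : ℝ) := by push_cast; ring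
  rcases lt_trichotomy m n with h' | h' | h'
  · exfalso
    have : (m:ℝ) + 1 ≤ n := by exact_mod_cast Nat.succ_le_of_lt h'
    have := abs_lt.mp h; linarith
  · exact h'
  · exfalso
    have : (n:ℝ) + 1 ≤ m := by exact_mod_cast Nat.succ_le_of_lt h'
    have := abs_lt.mp h; linarith

lemma Ppt_injective {N q : ℕ} (hN : 0 < N) (hq : 0 < q) :
    Function.Injective (Ppt N q) := by
  have hN' : (0:ℝ) < N := by exact_mod_cast hN
  have hq' : (0:ℝ) < q := by exact_mod_cast hq
  rintro ⟨a, b, j⟩ ⟨a', b', j'⟩ h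
  have hx : ((a : ℝ) + 2⁻¹) / N + (j : ℝ) * eps N q
      = ((a' : ℝ) + 2⁻¹) / N + (j' : ℝ) * eps N q := congrArg (fun z => z 0) h
  have hy : ((b : ℝ) + 2⁻¹) / N = ((b' : ℝ) + 2⁻¹) / N := congrArg (fun z => z 1) h
  have hb : b = b' := by
    have h2 : ((b:ℝ) + 2⁻¹) = ((b':ℝ) + 2⁻¹) := by
      have hmul := congrArg (fun z => z * (N:ℝ)) hy
      simpa [div_mul_cancel₀, hN'.ne'] using hmul
    have h3 : ((b:ℕ):ℝ) = ((b':ℕ):ℝ) := by linarith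
    exact Fin.ext (by exact_mod_cast h3)
  have hja : (0:ℝ) ≤ (j : ℝ) * eps N q := mul_nonneg (Nat.cast_nonneg _) (eps_pos hN hq).le
  have hja' : (j : ℝ) * eps N q ≤ 1 / (8 * N) := mul_eps_le hN hq _
  have hjb : (0:ℝ) ≤ (j' : ℝ) * eps N q := mul_nonneg (Nat.cast_nonneg _) (eps_pos hN hq).le
  have hjb' : (j' : ℝ) * eps N q ≤ 1 / (8 * N) := mul_eps_le hN hq _
  have ha : a = a' := by
    apply Fin.ext
    apply cast_eq_of_abs_lt_one (m := (a:ℕ)) (n := (a':ℕ))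
    have hdiff : ((a:ℝ) - a')/N = (j' : ℝ) * eps N q - (j : ℝ) * eps N q := by
      have hsplit : ((a:ℝ) - a')/N = ((a:ℝ)+2⁻¹)/N - ((a':ℝ)+2⁻¹)/N := by ring
      rw [hsplit]; linarith
    have h8 : |((a:ℝ) - a')/N| ≤ 1/(8*N) := by
      rw [hdiff]; rw [abs_le]; constructor <;> linarith
    rw [abs_div, abs_of_pos hN'] at h8
    rw [div_le_div_iff₀ hN' (by positivity)] at h8
    nlinarith
  subst hb; subst ha
  have hj : j = j' := by
    apply Fin.ext
    have heps : eps N q ≠ 0 := (eps_pos hN hq).ne'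
    have : (j : ℝ) = (j' : ℝ) := by
      have := mul_right_cancel₀ heps (by linarith : (j : ℝ) * eps N q = (j' : ℝ) * eps N q)
      exact this
    exact_mod_cast this
  subst hj; rfl

lemma ctr_dist_ge {N : ℕ} (hN : 0 < N) {c c' : Fin N × Fin N} (h : c ≠ c') :
    1 / (N:ℝ) ≤ dist (ctr N c) (ctr N c') := by
  have hN' : (0:ℝ) < N := by exact_mod_cast hN
  have key : ∀ m n : ℕ, m ≠ n → 1 / (N:ℝ) ≤ |((m:ℝ) + 2⁻¹)/N - ((n:ℝ) + 2⁻¹)/N| := by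
    intro m n hmn
    have h1 : (1:ℝ) ≤ |(m:ℝ) - (n:ℝ)| := by
      by_contra hcon
      push_neg at hcon
      exact hmn (cast_eq_of_abs_lt_one hcon)
    have : ((m:ℝ) + 2⁻¹)/N - ((n:ℝ) + 2⁻¹)/N = ((m:ℝ) - n)/N := by ring
    rw [this, abs_div, abs_of_pos hN', div_le_div_iff₀ hN' hN']
    nlinarith
  rcases Prod.ext_iff.not.mp h with _
  by_cases h1 : c.1 = c'.1
  · have h2 : c.2 ≠ c'.2 := by
      intro h2; exact h (Prod.ext h1 h2)
    have h2' : (c.2 : ℕ) ≠ (c'.2 : ℕ) := fun hh => h2 (Fin.ext hh)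
    calc 1/(N:ℝ) ≤ |((c.2:ℝ) + 2⁻¹)/N - ((c'.2:ℝ) + 2⁻¹)/N| := key _ _ h2'
    _ ≤ _ := abs_sub_y_le_dist_pt _ _ _ _
  · have h1' : (c.1 : ℕ) ≠ (c'.1 : ℕ) := fun hh => h1 (Fin.ext hh)
    calc 1/(N:ℝ) ≤ |((c.1:ℝ) + 2⁻¹)/N - ((c'.1:ℝ) + 2⁻¹)/N| := key _ _ h1'
    _ ≤ _ := abs_sub_x_le_dist_pt _ _ _ _


/-- A preconnected set meeting both `D` and its complement meets `frontier D`. -/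
lemma preconn_meets_frontier {X : Type*} [TopologicalSpace X] {s D : Set X}
    (hs : IsPreconnected s) (hx : ∃ x ∈ s, x ∈ D) (hy : ∃ y ∈ s, y ∉ D) :
    ∃ z ∈ s, z ∈ frontier D := by
  by_contra hcon
  push_neg at hcon
  have hsub : s ⊆ interior D ∪ interior Dᶜ := by
    intro z hz
    have hzf : z ∉ frontier D := hcon z hz
    by_cases hzD : z ∈ D
    · left
      have : z ∈ closure D := subset_closure hzD
      simp only [frontier, Set.mem_diff, not_and, not_not] at hzf
      exact hzf this
    · right
      have hzf' : z ∉ frontier Dᶜ := by rwa [frontier_compl]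
      have : z ∈ closure Dᶜ := subset_closure hzD
      simp only [frontier, Set.mem_diff, not_and, not_not] at hzf'
      exact hzf' this
  obtain ⟨x, hxs, hxD⟩ := hx
  obtain ⟨y, hys, hyD⟩ := hy
  have hxi : x ∈ interior D := by
    rcases hsub hxs with h | h
    · exact h
    · exact absurd (interior_subset h) (by simpa using hxD)
  have hyi : y ∈ interior Dᶜ := by
    rcases hsub hys with h | h
    · exact absurd (interior_subset h) hyD
    · exact h
  obtain ⟨z, hzs, hz1, hz2⟩ := hs (interior D) (interior Dᶜ) isOpen_interior isOpen_interior
    hsub ⟨x, hxs, hxi⟩ ⟨y, hys, hyi⟩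
  exact (interior_subset hz2) (interior_subset hz1)

lemma volume_unitSq : volume unitSq = 1 := by
  have hpre : unitSq = (MeasurableEquiv.toLp 2 (Fin 2 → ℝ)).symm ⁻¹'
      (Set.univ.pi fun _ : Fin 2 => Set.Icc (0:ℝ) 1) := by
    ext x
    simp only [unitSq, Set.mem_preimage, Set.mem_pi, Set.mem_univ, forall_true_left,
      Fin.forall_fin_two, Set.mem_setOf_eq, Set.mem_Icc]
    constructor <;> intro h <;> try tauto
  rw [hpre, (EuclideanSpace.volume_preserving_symm_measurableEquiv_toLp (Fin 2)).measure_preimage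
    ((MeasurableSet.univ_pi fun _ => measurableSet_Icc).nullMeasurableSet)]
  rw [volume_pi_pi]
  simp [Real.volume_Icc]

/-- Counting cells whose center is near a Lipschitz curve. -/
lemma split_count {L : ℝ} (hL : 0 ≤ L) {γ : ℝ → Plane}
    (hγ : LipschitzOnWith 1 γ (Set.Icc 0 L)) {N : ℕ} (hN : 0 < N)
    (S : Finset (Fin N × Fin N))
    (hS : ∀ c ∈ S, ∃ t ∈ Set.Icc 0 L, dist (γ t) (ctr N c) ≤ 1 / (8 * N)) :
    (S.card : ℝ) ≤ 4 * N * L + 1 := by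
  classical
  have hN' : (0:ℝ) < N := by exact_mod_cast hN
  have h' : ∀ c, ∃ t, c ∈ S → (t ∈ Set.Icc 0 L ∧ dist (γ t) (ctr N c) ≤ 1 / (8 * N)) := by
    intro c
    by_cases hc : c ∈ S
    · obtain ⟨t, ht, hd⟩ := hS c hc
      exact ⟨t, fun _ => ⟨ht, hd⟩⟩
    · exact ⟨0, fun h => absurd h hc⟩
  choose t ht using h'
  have hcard : S.card ≤ (Finset.range (⌊4 * N * L⌋₊ + 1)).card := by
    apply Finset.card_le_card_of_injOn (fun c => ⌊4 * (N:ℝ) * (t c)⌋₊)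
    · intro c hc
      obtain ⟨⟨ht0, htL⟩, _⟩ := ht c hc
      simp only [Finset.mem_coe, Finset.mem_range, Nat.lt_add_one_iff]
      exact Nat.floor_le_floor (by nlinarith : 4 * (N:ℝ) * t c ≤ 4 * N * L)
    · intro c hc c' hc' hfc
      by_contra hne
      obtain ⟨⟨ht0, htL⟩, hd⟩ := ht c hc
      obtain ⟨⟨ht0', htL'⟩, hd'⟩ := ht c' hc'
      have hb1 : (⌊4 * (N:ℝ) * (t c)⌋₊ : ℝ) ≤ 4 * N * t c := Nat.floor_le (by positivity)
      have hb2 : 4 * (N:ℝ) * t c < ⌊4 * (N:ℝ) * (t c)⌋₊ + 1 := Nat.lt_floor_add_one _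
      have hb3 : (⌊4 * (N:ℝ) * (t c')⌋₊ : ℝ) ≤ 4 * N * t c' := Nat.floor_le (by positivity)
      have hb4 : 4 * (N:ℝ) * t c' < ⌊4 * (N:ℝ) * (t c')⌋₊ + 1 := Nat.lt_floor_add_one _
      have heq : ((⌊4 * (N:ℝ) * (t c)⌋₊ : ℕ) : ℝ) = ((⌊4 * (N:ℝ) * (t c')⌋₊ : ℕ) : ℝ) := by
        exact_mod_cast congrArg (Nat.cast (R := ℝ)) hfc
      have h5 : 4*(N:ℝ)*(t c - t c') < 1 := by linarith
      have h6 : 4*(N:ℝ)*(t c' - t c) < 1 := by linarith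
      have hlt : |4*(N:ℝ)*(t c - t c')| < 1 := abs_lt.mpr ⟨by linarith, by linarith⟩
      have hdist_t : dist (t c) (t c') ≤ 1 / (4 * N) := by
        rw [Real.dist_eq]
        refine le_of_lt ?_
        rw [lt_div_iff₀ (by positivity)]
        calc |t c - t c'| * (4*N) = |4*(N:ℝ)*(t c - t c')| := by
              rw [abs_mul, abs_of_pos (by positivity : (0:ℝ) < 4*(N:ℝ))]; ring
        _ < 1 := hlt
      have hgd : dist (γ (t c)) (γ (t c')) ≤ 1 / (4 * N) := by
        have := hγ.dist_le_mul _ (Set.mem_Icc.mpr ⟨ht0, htL⟩) _ (Set.mem_Icc.mpr ⟨ht0', htL'⟩)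
        simpa using this.trans (by simpa using hdist_t)
      have hcc : dist (ctr N c) (ctr N c') ≤ 1 / (2 * N) := by
        have h1 : dist (ctr N c) (ctr N c') ≤
            dist (ctr N c) (γ (t c)) + dist (γ (t c)) (γ (t c')) + dist (γ (t c')) (ctr N c') :=
          dist_triangle4 _ _ _ _
        rw [dist_comm (ctr N c) (γ (t c))] at h1
        have : (1:ℝ)/(8*N) + 1/(4*N) + 1/(8*N) = 1/(2*N) := by field_simp; ring
        linarith
      have := ctr_dist_ge hN hne
      have : (1:ℝ)/N ≤ 1/(2*N) := le_trans this hcc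
      rw [div_le_div_iff₀ hN' (by positivity)] at this
      nlinarith
  have h2 : ((⌊4 * (N:ℝ) * L⌋₊ : ℕ) : ℝ) ≤ 4 * N * L := Nat.floor_le (by positivity)
  calc (S.card : ℝ) ≤ ((⌊4 * (N:ℝ) * L⌋₊ + 1 : ℕ) : ℝ) := by
        exact_mod_cast hcard.trans (le_of_eq (Finset.card_range _))
  _ ≤ 4 * N * L + 1 := by push_cast; linarith


/-- index of the `j`-th A-point within a cluster -/
def jA (p : ℕ) (j : Fin (p+1)) : Fin (2*p+1) := ⟨2*j.1, by have := j.isLt; omega⟩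
/-- index of the `j`-th B-point within a cluster -/
def jB (p : ℕ) (j : Fin p) : Fin (2*p+1) := ⟨2*j.1+1, by have := j.isLt; omega⟩
/-- the A-points -/
def PA (N p : ℕ) (v : Fin N × Fin N × Fin (p+1)) : Plane :=
  Ppt N (2*p+1) (v.1, v.2.1, jA p v.2.2)
/-- the B-points -/
def PB (N p : ℕ) (v : Fin N × Fin N × Fin p) : Plane :=
  Ppt N (2*p+1) (v.1, v.2.1, jB p v.2.2)

lemma PA_injective {N p : ℕ} (hN : 0 < N) : Function.Injective (PA N p) := by
  intro v w h
  have h2 := Ppt_injective hN (by omega) h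
  obtain ⟨h3, h4, h5⟩ : v.1 = w.1 ∧ v.2.1 = w.2.1 ∧ jA p v.2.2 = jA p w.2.2 := by
    simpa [Prod.ext_iff] using h2
  have h6 : v.2.2 = w.2.2 := by
    have := congrArg Fin.val h5
    simp only [jA] at this
    exact Fin.ext (by omega)
  exact Prod.ext h3 (Prod.ext h4 h6)

lemma PB_injective {N p : ℕ} (hN : 0 < N) : Function.Injective (PB N p) := by
  intro v w h
  have h2 := Ppt_injective hN (by omega) h
  obtain ⟨h3, h4, h5⟩ : v.1 = w.1 ∧ v.2.1 = w.2.1 ∧ jB p v.2.2 = jB p w.2.2 := by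
    simpa [Prod.ext_iff] using h2
  have h6 : v.2.2 = w.2.2 := by
    have := congrArg Fin.val h5
    simp only [jB] at this
    exact Fin.ext (by omega)
  exact Prod.ext h3 (Prod.ext h4 h6)

lemma PA_ne_PB {N p : ℕ} (hN : 0 < N) (v : Fin N × Fin N × Fin (p+1))
    (w : Fin N × Fin N × Fin p) : PA N p v ≠ PB N p w := by
  intro h
  have h2 := Ppt_injective hN (by omega) h
  have h5 : jA p v.2.2 = jB p w.2.2 := by
    have := (Prod.ext_iff.mp h2).2
    exact (Prod.ext_iff.mp this).2
  have := congrArg Fin.val h5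
  simp only [jA, jB] at this
  omega

lemma arith_nat_lt {n p : ℕ} (h : 1 ≤ n) : n * n * p < n * n * (p + 1) := by nlinarith

lemma arith_imbal {β x pR : ℝ} (hx : 0 < x) (hβq : 1 < β * (2 * pR + 1)) :
    x * (pR + 1) - x * pR < β * (x * (2 * pR + 1)) := by
  nlinarith [mul_lt_mul_of_pos_left hβq hx]

lemma arith_divkey {NR kR pR s δ : ℝ} (hk' : 0 < kR) (hN0 : 0 ≤ NR) (hp0 : 0 ≤ pR)
    (hs0 : 0 ≤ s) (hNR : kR * ((pR + 1) * (4 * s + 2) + 2) ≤ (1 - δ) * NR) :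
    NR * ((pR + 1) * (4 * s + 2) + 2) * (2 * pR + 1)
      ≤ (1 - δ) * ((NR * NR * (2 * pR + 1)) / kR) := by
  rw [← mul_div_assoc, le_div_iff₀ hk']
  nlinarith [mul_le_mul_of_nonneg_right hNR
    (by positivity : (0:ℝ) ≤ NR * (2 * pR + 1))]

lemma arith_fMlow {NR kR pR s δ cU fM : ℝ} (hδ0 : 0 ≤ δ) (hp1 : 1 ≤ pR)
    (hcUlow : (1 - δ) * ((NR * NR * (2 * pR + 1)) / kR - 1) ≤ cU)
    (hcU' : cU ≤ fM * (2 * pR + 1))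
    (hdiv : NR * ((pR + 1) * (4 * s + 2) + 2) * (2 * pR + 1)
      ≤ (1 - δ) * ((NR * NR * (2 * pR + 1)) / kR)) :
    NR * ((pR + 1) * (4 * s + 2) + 2) - 1 ≤ fM := by
  have h2p1 : (0:ℝ) < 2 * pR + 1 := by linarith
  rw [← mul_le_mul_iff_left₀ h2p1]
  nlinarith

lemma arith_key {NR pR s fS fF fM : ℝ} (hN1 : 1 ≤ NR) (hp1 : 1 ≤ pR) (hs0 : 0 ≤ s)
    (hfS0 : 0 ≤ fS) (hfMlow : NR * ((pR + 1) * (4 * s + 2) + 2) - 1 ≤ fM)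
    (hMeq : fS + fF = fM) (hfSb : fS ≤ 4 * NR * s + 1) : pR * fS < fF := by
  nlinarith [mul_le_mul_of_nonneg_left hfSb (by linarith : (0:ℝ) ≤ pR),
    mul_nonneg (by linarith : (0:ℝ) ≤ NR - 1) (by linarith : (0:ℝ) ≤ pR),
    mul_nonneg (mul_nonneg (by linarith : (0:ℝ) ≤ NR - 1) hs0) (by linarith : (0:ℝ) ≤ pR)]

lemma arith_final {pR fS fF fM cA cB : ℝ} (hp0 : 0 ≤ pR) (hMeq : fS + fF = fM)
    (hkey : pR * fS < fF) (hcA : fF * (pR + 1) ≤ cA) (hcB : cB ≤ fM * pR) : cB < cA := by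
  nlinarith

end MSaux

/-- **Core step of the paper's Theorem 1.**
For all `δ ∈ [0,1)`, `C > 0`, `β > 0` and `k ≥ 1` there exist disjoint finite sets
`A, B ⊆ [0,1]²` with `0 < |A| - |B| < β|A ∪ B|` such that for any measurable partition of
`[0,1]²` into districts `D₁, …, D_k` satisfying the one-person-one-vote condition with
parameter `δ` and the Polsby–Popper compactness condition (each `frontier (D i)` is covered
by a `1`-Lipschitz curve of length `L i` with `L i ^ 2 ≤ C · vol (D i)`), party `A` strictly
wins every district. -/
theorem majority_sweeps (δ C β : ℝ) (hδ0 : 0 ≤ δ) (hδ1 : δ < 1) (hC : 0 < C)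
    (hβ : 0 < β) (k : ℕ) (hk : 1 ≤ k) :
    ∃ A B : Set Plane, A.Finite ∧ B.Finite ∧ Disjoint A B ∧ A ⊆ unitSq ∧ B ⊆ unitSq ∧
      (A ∪ B).Nonempty ∧ B.ncard < A.ncard ∧
      (A.ncard : ℝ) - (B.ncard : ℝ) < β * ((A ∪ B).ncard : ℝ) ∧
      ∀ D : Fin k → Set Plane,
        (∀ i, MeasurableSet (D i)) →
        (Pairwise fun i j => Disjoint (D i) (D j)) →
        (⋃ i, D i) = unitSq →
        (∀ i, (1 - δ) * (⌊((A ∪ B).ncard : ℝ) / (k : ℝ)⌋ : ℝ)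
                ≤ (((A ∪ B) ∩ D i).ncard : ℝ) ∧
              (((A ∪ B) ∩ D i).ncard : ℝ)
                ≤ (1 + δ) * (⌈((A ∪ B).ncard : ℝ) / (k : ℝ)⌉ : ℝ)) →
        (∀ i, ∃ L : ℝ, 0 ≤ L ∧ ∃ γ : ℝ → Plane,
            LipschitzOnWith 1 γ (Set.Icc 0 L) ∧
            frontier (D i) ⊆ γ '' Set.Icc 0 L ∧
            L ^ 2 ≤ C * (volume (D i)).toReal) →
        ∀ i, (B ∩ D i).ncard < (A ∩ D i).ncard := by
  classical
  obtain ⟨p, hpceil⟩ : ∃ p : ℕ, p = ⌈β⁻¹⌉₊ := ⟨_, rfl⟩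
  have hp1 : 1 ≤ p := by
    rw [hpceil]; exact Nat.one_le_iff_ne_zero.mpr (by positivity)
  have hβq : 1 < β * (2*(p:ℝ)+1) := by
    have h1 : β⁻¹ ≤ (p:ℝ) := hpceil ▸ Nat.le_ceil _
    have h2 : 1 ≤ β * p := by
      have := mul_le_mul_of_nonneg_left h1 hβ.le
      rwa [mul_inv_cancel₀ hβ.ne'] at this
    nlinarith
  set s := Real.sqrt C with hs
  have hs0 : 0 ≤ s := Real.sqrt_nonneg _
  obtain ⟨N₀, hN₀⟩ := exists_nat_ge ((k * (((p:ℝ)+1)*(4*s+2)+2))/(1-δ))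
  obtain ⟨N, hNdef⟩ : ∃ N : ℕ, N = max N₀ 1 := ⟨_, rfl⟩
  have hN1 : 1 ≤ N := hNdef ▸ le_max_right _ _
  have hNpos : 0 < N := hN1
  have hN1R : (1:ℝ) ≤ N := by exact_mod_cast hN1
  have hNposR : (0:ℝ) < N := by linarith
  have hNR : (k:ℝ) * (((p:ℝ)+1)*(4*s+2)+2) ≤ (1-δ) * N := by
    have h2 : (N₀:ℝ) ≤ N := by exact_mod_cast hNdef ▸ le_max_left N₀ 1
    have h3 : (k * (((p:ℝ)+1)*(4*s+2)+2))/(1-δ) ≤ (N:ℝ) := le_trans hN₀ h2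
    rw [div_le_iff₀ (by linarith)] at h3
    linarith
  have hq0 : 0 < 2*p+1 := by omega
  have hPptinj : Function.Injective (MSaux.Ppt N (2*p+1)) := MSaux.Ppt_injective hNpos hq0
  have hPAinj : Function.Injective (MSaux.PA N p) := MSaux.PA_injective hNpos
  have hPBinj : Function.Injective (MSaux.PB N p) := MSaux.PB_injective hNpos
  set FA : Finset Plane := Finset.image (MSaux.PA N p) Finset.univ with hFA
  set FB : Finset Plane := Finset.image (MSaux.PB N p) Finset.univ with hFB
  set FU : Finset Plane := Finset.image (MSaux.Ppt N (2*p+1)) Finset.univ with hFU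
  have cardFA : FA.card = N * N * (p+1) := by
    rw [hFA, Finset.card_image_of_injective _ hPAinj, Finset.card_univ]
    simp [mul_assoc]
  have cardFB : FB.card = N * N * p := by
    rw [hFB, Finset.card_image_of_injective _ hPBinj, Finset.card_univ]
    simp [mul_assoc]
  have cardFU : FU.card = N * N * (2*p+1) := by
    rw [hFU, Finset.card_image_of_injective _ hPptinj, Finset.card_univ]
    simp [mul_assoc]
  have hAB : ((FA : Set Plane) ∪ (FB : Set Plane)) = (FU : Set Plane) := by
    ext z
    simp only [Set.mem_union, Finset.mem_coe, hFA, hFB, hFU, Finset.mem_image,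
      Finset.mem_univ, true_and]
    constructor
    · rintro (⟨v, rfl⟩ | ⟨v, rfl⟩)
      · exact ⟨(v.1, v.2.1, MSaux.jA p v.2.2), rfl⟩
      · exact ⟨(v.1, v.2.1, MSaux.jB p v.2.2), rfl⟩
    · rintro ⟨⟨a, b, j⟩, rfl⟩
      rcases Nat.even_or_odd (j : ℕ) with ⟨m, hm⟩ | ⟨m, hm⟩
      · left
        refine ⟨(a, b, ⟨m, by have := j.isLt; omega⟩), ?_⟩
        have hj : MSaux.jA p ⟨m, by have := j.isLt; omega⟩ = j := by
          apply Fin.ext; simp [MSaux.jA]; omega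
        show MSaux.Ppt N (2*p+1) (a, b, MSaux.jA p ⟨m, by have := j.isLt; omega⟩) = _
        rw [hj]
      · right
        refine ⟨(a, b, ⟨m, by have := j.isLt; omega⟩), ?_⟩
        have hj : MSaux.jB p ⟨m, by have := j.isLt; omega⟩ = j := by
          apply Fin.ext; simp [MSaux.jB]; omega
        show MSaux.Ppt N (2*p+1) (a, b, MSaux.jB p ⟨m, by have := j.isLt; omega⟩) = _
        rw [hj]
  refine ⟨(FA : Set Plane), (FB : Set Plane), Finset.finite_toSet _, Finset.finite_toSet _,
    ?_, ?_, ?_, ?_, ?_, ?_, ?_⟩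
  · -- Disjoint
    rw [Set.disjoint_left]
    intro z hzA hzB
    simp only [Finset.mem_coe, hFA, hFB, Finset.mem_image, Finset.mem_univ, true_and] at hzA hzB
    obtain ⟨v, rfl⟩ := hzA
    obtain ⟨w, hw⟩ := hzB
    exact MSaux.PA_ne_PB hNpos v w hw.symm
  · -- A ⊆ unitSq
    intro z hz
    simp only [Finset.mem_coe, hFA, Finset.mem_image, Finset.mem_univ, true_and] at hz
    obtain ⟨v, rfl⟩ := hz
    exact MSaux.Ppt_mem_unitSq hNpos hq0 _
  · -- B ⊆ unitSq
    intro z hz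
    simp only [Finset.mem_coe, hFB, Finset.mem_image, Finset.mem_univ, true_and] at hz
    obtain ⟨v, rfl⟩ := hz
    exact MSaux.Ppt_mem_unitSq hNpos hq0 _
  · -- Nonempty
    refine ⟨MSaux.PA N p (⟨0, hNpos⟩, ⟨0, hNpos⟩, ⟨0, p.succ_pos⟩), Set.mem_union_left _ ?_⟩
    simp only [Finset.mem_coe, hFA, Finset.mem_image, Finset.mem_univ, true_and]
    exact ⟨_, rfl⟩
  · -- B.ncard < A.ncard
    rw [Set.ncard_coe_finset, Set.ncard_coe_finset, cardFA, cardFB]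
    exact MSaux.arith_nat_lt hN1
  · -- imbalance
    rw [Set.ncard_coe_finset, Set.ncard_coe_finset, hAB, Set.ncard_coe_finset,
      cardFA, cardFB, cardFU]
    push_cast
    exact MSaux.arith_imbal (by positivity) hβq
  · -- main district statement
    intro D hmeas hdisj hcover hcount hcurve i
    obtain ⟨L, hL0, γ, hγ, hfront, hiso⟩ := hcurve i
    have hDsub : D i ⊆ unitSq := hcover ▸ Set.subset_iUnion D i
    have hvol : (volume (D i)).toReal ≤ 1 := by
      have h1 : volume (D i) ≤ 1 := by
        rw [← MSaux.volume_unitSq]; exact measure_mono hDsub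
      calc (volume (D i)).toReal ≤ (1 : ℝ≥0∞).toReal := ENNReal.toReal_mono (by simp) h1
      _ = 1 := by simp
    have hLs : L ≤ s := by
      have h1 : L^2 ≤ C := hiso.trans (mul_le_of_le_one_right hC.le hvol)
      calc L = Real.sqrt (L^2) := (Real.sqrt_sq hL0).symm
      _ ≤ s := Real.sqrt_le_sqrt h1
    -- cells
    set Fl : Finset (Fin N × Fin N) := Finset.univ.filter
      (fun c => ∀ j : Fin (2*p+1), MSaux.Ppt N (2*p+1) (c.1, c.2, j) ∈ D i) with hFl
    set Me : Finset (Fin N × Fin N) := Finset.univ.filter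
      (fun c => ∃ j : Fin (2*p+1), MSaux.Ppt N (2*p+1) (c.1, c.2, j) ∈ D i) with hMe
    set Sp : Finset (Fin N × Fin N) := Me \ Fl with hSp
    have hFlMe : Fl ⊆ Me := by
      intro c hc
      rw [hFl, Finset.mem_filter] at hc
      rw [hMe, Finset.mem_filter]
      exact ⟨Finset.mem_univ _, ⟨⟨0, hq0⟩, hc.2 _⟩⟩
    have hcards : Sp.card + Fl.card = Me.card := by
      rw [hSp]; exact Finset.card_sdiff_add_card_eq_card hFlMe
    -- counts as filters
    have hAi : ((FA : Set Plane) ∩ D i).ncard = (FA.filter (· ∈ D i)).card := by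
      rw [← Set.ncard_coe_finset (FA.filter (· ∈ D i))]
      congr 1
      ext z
      simp [Finset.mem_filter]
    have hBi : ((FB : Set Plane) ∩ D i).ncard = (FB.filter (· ∈ D i)).card := by
      rw [← Set.ncard_coe_finset (FB.filter (· ∈ D i))]
      congr 1
      ext z
      simp [Finset.mem_filter]
    have hUi : ((FU : Set Plane) ∩ D i).ncard = (FU.filter (· ∈ D i)).card := by
      rw [← Set.ncard_coe_finset (FU.filter (· ∈ D i))]
      congr 1
      ext z
      simp [Finset.mem_filter]
    -- (i) A-count lower bound
    have hreassocA : Function.Injective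
        (fun cj : (Fin N × Fin N) × Fin (p+1) => MSaux.PA N p (cj.1.1, cj.1.2, cj.2)) := by
      intro x y h
      have h2 := hPAinj h
      obtain ⟨h3, h4, h5⟩ : x.1.1 = y.1.1 ∧ x.1.2 = y.1.2 ∧ x.2 = y.2 := by
        simpa [Prod.ext_iff] using h2
      exact Prod.ext (Prod.ext h3 h4) h5
    have hcA : Fl.card * (p+1) ≤ (FA.filter (· ∈ D i)).card := by
      have hTsub : (Fl ×ˢ (Finset.univ : Finset (Fin (p+1)))).image
          (fun cj => MSaux.PA N p (cj.1.1, cj.1.2, cj.2)) ⊆ FA.filter (· ∈ D i) := by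
        intro z hz
        simp only [Finset.mem_image, Finset.mem_product] at hz
        obtain ⟨⟨c, j⟩, ⟨hc, -⟩, rfl⟩ := hz
        refine Finset.mem_filter.mpr ⟨?_, ?_⟩
        · rw [hFA, Finset.mem_image]
          exact ⟨(c.1, c.2, j), Finset.mem_univ _, rfl⟩
        · rw [hFl, Finset.mem_filter] at hc
          exact hc.2 (MSaux.jA p j)
      calc Fl.card * (p+1)
          = ((Fl ×ˢ (Finset.univ : Finset (Fin (p+1)))).image
            (fun cj => MSaux.PA N p (cj.1.1, cj.1.2, cj.2))).card := by
            rw [Finset.card_image_of_injective _ hreassocA, Finset.card_product,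
              Finset.card_univ, Fintype.card_fin]
      _ ≤ _ := Finset.card_le_card hTsub
    -- (ii) B-count upper bound
    have hcB : (FB.filter (· ∈ D i)).card ≤ Me.card * p := by
      have hBsub : FB.filter (· ∈ D i) ⊆ (Me ×ˢ (Finset.univ : Finset (Fin p))).image
          (fun cj => MSaux.PB N p (cj.1.1, cj.1.2, cj.2)) := by
        intro z hz
        obtain ⟨hzB, hzD⟩ := Finset.mem_filter.mp hz
        rw [hFB, Finset.mem_image] at hzB
        obtain ⟨v, -, rfl⟩ := hzB
        refine Finset.mem_image.mpr ⟨((v.1, v.2.1), v.2.2), ?_, rfl⟩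
        refine Finset.mem_product.mpr ⟨?_, Finset.mem_univ _⟩
        rw [hMe, Finset.mem_filter]
        exact ⟨Finset.mem_univ _, ⟨MSaux.jB p v.2.2, hzD⟩⟩
      calc (FB.filter (· ∈ D i)).card ≤ _ := Finset.card_le_card hBsub
      _ ≤ (Me ×ˢ (Finset.univ : Finset (Fin p))).card := Finset.card_image_le
      _ = Me.card * p := by rw [Finset.card_product, Finset.card_univ, Fintype.card_fin]
    -- (iii) total count upper bound
    have hcU : (FU.filter (· ∈ D i)).card ≤ Me.card * (2*p+1) := by
      have hUsub : FU.filter (· ∈ D i) ⊆ (Me ×ˢ (Finset.univ : Finset (Fin (2*p+1)))).image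
          (fun cj => MSaux.Ppt N (2*p+1) (cj.1.1, cj.1.2, cj.2)) := by
        intro z hz
        obtain ⟨hzU, hzD⟩ := Finset.mem_filter.mp hz
        rw [hFU, Finset.mem_image] at hzU
        obtain ⟨v, -, rfl⟩ := hzU
        refine Finset.mem_image.mpr ⟨((v.1, v.2.1), v.2.2), ?_, rfl⟩
        refine Finset.mem_product.mpr ⟨?_, Finset.mem_univ _⟩
        rw [hMe, Finset.mem_filter]
        exact ⟨Finset.mem_univ _, ⟨v.2.2, hzD⟩⟩
      calc (FU.filter (· ∈ D i)).card ≤ _ := Finset.card_le_card hUsub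
      _ ≤ (Me ×ˢ (Finset.univ : Finset (Fin (2*p+1)))).card := Finset.card_image_le
      _ = Me.card * (2*p+1) := by rw [Finset.card_product, Finset.card_univ, Fintype.card_fin]
    -- (iv) split cells are near the curve
    have hSp_near : ∀ c ∈ Sp, ∃ t ∈ Set.Icc 0 L, dist (γ t) (MSaux.ctr N c) ≤ 1/(8*N) := by
      intro c hc
      rw [hSp, Finset.mem_sdiff] at hc
      obtain ⟨hcM, hcF⟩ := hc
      rw [hMe, Finset.mem_filter] at hcM
      obtain ⟨-, j1, hj1⟩ := hcM
      rw [hFl, Finset.mem_filter] at hcF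
      push_neg at hcF
      obtain ⟨j0, hj0⟩ := hcF (Finset.mem_univ _)
      set x := MSaux.Ppt N (2*p+1) (c.1, c.2, j1) with hx
      set y := MSaux.Ppt N (2*p+1) (c.1, c.2, j0) with hy
      have hxB : x ∈ closedBall (MSaux.ctr N c) (1/(8*N)) :=
        mem_closedBall.mpr (MSaux.dist_Ppt_ctr hNpos hq0 (c.1, c.2, j1))
      have hyB : y ∈ closedBall (MSaux.ctr N c) (1/(8*N)) :=
        mem_closedBall.mpr (MSaux.dist_Ppt_ctr hNpos hq0 (c.1, c.2, j0))
      have hseg : segment ℝ x y ⊆ closedBall (MSaux.ctr N c) (1/(8*N)) :=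
        (convex_closedBall _ _).segment_subset hxB hyB
      obtain ⟨z, hzseg, hzf⟩ := MSaux.preconn_meets_frontier
        (convex_segment x y).isPreconnected
        ⟨x, left_mem_segment ℝ x y, hj1⟩ ⟨y, right_mem_segment ℝ x y, hj0⟩
      obtain ⟨t, htI, rfl⟩ := hfront hzf
      exact ⟨t, htI, mem_closedBall.mp (hseg hzseg)⟩
    have hSpcard : (Sp.card : ℝ) ≤ 4*N*L + 1 :=
      MSaux.split_count hL0 hγ hNpos Sp hSp_near
    -- (v) hypothesis lower bound
    obtain ⟨hlow, -⟩ := hcount i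
    rw [hAB, Set.ncard_coe_finset, cardFU, hUi] at hlow
    -- final numeric computation, over ℝ
    rw [hAi, hBi]
    have hk' : (0:ℝ) < k := by exact_mod_cast hk
    have hδ : (0:ℝ) < 1 - δ := by linarith
    have hMeq : (Sp.card : ℝ) + (Fl.card : ℝ) = (Me.card : ℝ) := by exact_mod_cast hcards
    have hcA' : (Fl.card : ℝ) * ((p:ℝ)+1) ≤ ((FA.filter (· ∈ D i)).card : ℝ) := by
      exact_mod_cast hcA
    have hcB' : ((FB.filter (· ∈ D i)).card : ℝ) ≤ (Me.card : ℝ) * (p:ℝ) := by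
      exact_mod_cast hcB
    have hcU' : ((FU.filter (· ∈ D i)).card : ℝ) ≤ (Me.card : ℝ) * (2*(p:ℝ)+1) := by
      exact_mod_cast hcU
    have hfS0 : (0:ℝ) ≤ (Sp.card : ℝ) := Nat.cast_nonneg _
    have hfF0 : (0:ℝ) ≤ (Fl.card : ℝ) := Nat.cast_nonneg _
    have hp1R : (1:ℝ) ≤ (p:ℝ) := by exact_mod_cast hp1
    have hnR : ((N * N * (2*p+1) : ℕ) : ℝ) = (N:ℝ)*(N:ℝ)*(2*(p:ℝ)+1) := by push_cast; ring
    have hfloor : ((N:ℝ)*(N:ℝ)*(2*(p:ℝ)+1))/k - 1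
        ≤ (⌊((N * N * (2*p+1) : ℕ) : ℝ) / (k:ℝ)⌋ : ℝ) := by
      rw [hnR]
      exact (Int.sub_one_lt_floor _).le
    have hcUlow : (1-δ) * (((N:ℝ)*(N:ℝ)*(2*(p:ℝ)+1))/k - 1)
        ≤ ((FU.filter (· ∈ D i)).card : ℝ) := by
      calc (1-δ) * (((N:ℝ)*(N:ℝ)*(2*(p:ℝ)+1))/k - 1)
          ≤ (1-δ) * (⌊((N * N * (2*p+1) : ℕ) : ℝ) / (k:ℝ)⌋ : ℝ) :=
            mul_le_mul_of_nonneg_left hfloor hδ.le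
      _ ≤ _ := hlow
    have hdivkey : (N:ℝ) * (((p:ℝ)+1)*(4*s+2)+2) * (2*(p:ℝ)+1)
        ≤ (1-δ) * (((N:ℝ)*(N:ℝ)*(2*(p:ℝ)+1))/k) := by
      exact MSaux.arith_divkey hk' (by positivity) (by positivity) hs0 hNR
    have hfMlow : (N:ℝ) * (((p:ℝ)+1)*(4*s+2)+2) - 1 ≤ (Me.card : ℝ) := by
      exact MSaux.arith_fMlow hδ0 hp1R hcUlow hcU' hdivkey
    have hfSbound : (Sp.card : ℝ) ≤ 4*(N:ℝ)*s + 1 := by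
      have h4 : 4*(N:ℝ)*L ≤ 4*(N:ℝ)*s :=
        mul_le_mul_of_nonneg_left hLs (by positivity : (0:ℝ) ≤ 4*(N:ℝ))
      linarith
    have hkey : (p:ℝ) * (Sp.card : ℝ) < (Fl.card : ℝ) := by
      exact MSaux.arith_key hN1R hp1R hs0 hfS0 hfMlow hMeq hfSbound
    have hfinal : ((FB.filter (· ∈ D i)).card : ℝ) < ((FA.filter (· ∈ D i)).card : ℝ) :=
      MSaux.arith_final (by positivity) hMeq hkey hcA' hcB'
    exact_mod_cast hfinal

end
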